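/- Let α > γ with α > 1 and γ ∈ (0,1], and suppose a nonnegative sequence satisfies y_n ≤ (1 − η n^{-γ}) y_{n-1} + a_1 n^{-α} with η > 0 and a_1 ≥ 0, assuming η > α − γ when γ = 1. Then there exist constants K_1 ≥ 0, D ≥ 0 (depending only on η, α, γ, a_1, and an explicit index n_0) such that y_n ≤ K_1 n^{-(α−γ)} + exp(−(1/2) log(1+η) φ_γ(n)) (y_0 + D) for all n ≥ 1, where φ_γ(n) = (n^{1-γ}−1)/(1−γ) for γ ∈ (0,1) and φ_1(n) = log n. -/

import Mathlib

noncomputable def phi (γ : ℝ) (n : ℕ) : ℝ :=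
  if γ < 1 then ((n : ℝ) ^ (1 - γ) - 1) / (1 - γ) else Real.log n

open Filter Real

lemma aux_bern {η t : ℝ} (hη : 0 ≤ η) (ht0 : 0 ≤ t) (ht1 : t ≤ 1) :
    t * Real.log (1 + η) ≤ Real.log (1 + η * t) := by
  have h1 : (1 + η) ^ t ≤ 1 + t * η :=
    rpow_one_add_le_one_add_mul_self (by linarith) ht0 ht1
  have h2 : Real.log ((1 + η) ^ t) ≤ Real.log (1 + t * η) :=
    Real.log_le_log (by positivity) h1
  rwa [Real.log_rpow (by linarith), mul_comm t η] at h2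

lemma aux_double {γ : ℝ} (hγ : 0 ≤ γ) (hγ1 : γ ≤ 1) {N : ℝ} (hN : 1 ≤ N) :
    (N + 1) ^ γ ≤ 2 * N ^ γ := by
  have h1 : (N + 1) ^ γ ≤ (2 * N) ^ γ :=
    Real.rpow_le_rpow (by linarith) (by linarith) hγ
  have h2 : (2 * N) ^ γ = 2 ^ γ * N ^ γ := Real.mul_rpow (by norm_num) (by linarith)
  have h3 : (2 : ℝ) ^ γ ≤ 2 ^ (1 : ℝ) := Real.rpow_le_rpow_of_exponent_le one_le_two hγ1
  rw [Real.rpow_one] at h3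
  calc (N + 1) ^ γ ≤ 2 ^ γ * N ^ γ := by rw [← h2]; exact h1
    _ ≤ 2 * N ^ γ :=
        mul_le_mul_of_nonneg_right h3 (Real.rpow_nonneg (by linarith) _)

lemma aux_phi_step {γ : ℝ} (hγ : 0 < γ) (hγ1 : γ ≤ 1) {n : ℕ} (hn : 1 ≤ n) :
    phi γ (n + 1) - phi γ n ≤ (n : ℝ) ^ (-γ) := by
  have hn1 : (1 : ℝ) ≤ (n : ℝ) := by exact_mod_cast hn
  have hn0 : (0 : ℝ) < (n : ℝ) := by linarith
  by_cases hlt : γ < 1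
  · simp only [phi, if_pos hlt]
    push_cast
    rw [div_sub_div_same, div_le_iff₀ (by linarith)]
    have key : ((n : ℝ) + 1) ^ (1 - γ) ≤ (n : ℝ) ^ (1 - γ) + (1 - γ) * (n : ℝ) ^ (-γ) := by
      have h1 : ((n : ℝ) + 1) = (n : ℝ) * (1 + 1 / n) := by field_simp
      rw [h1, Real.mul_rpow hn0.le (by positivity)]
      have h2 : (1 + 1 / (n : ℝ)) ^ (1 - γ) ≤ 1 + (1 - γ) * (1 / n) :=
        rpow_one_add_le_one_add_mul_self
          (by have : (0:ℝ) ≤ 1 / (n:ℝ) := by positivity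
              linarith) (by linarith) (by linarith)
      have h3 : (n : ℝ) ^ (1 - γ) * (1 / (n : ℝ)) = (n : ℝ) ^ (-γ) := by
        have h4 : (n : ℝ) ^ (1 - γ) = (n : ℝ) ^ (-γ) * (n : ℝ) := by
          rw [← Real.rpow_add_one hn0.ne']
          ring_nf
        rw [h4]
        field_simp
      calc ((n : ℝ)) ^ (1 - γ) * (1 + 1 / n) ^ (1 - γ)
          ≤ (n : ℝ) ^ (1 - γ) * (1 + (1 - γ) * (1 / n)) :=
            mul_le_mul_of_nonneg_left h2 (Real.rpow_nonneg hn0.le _)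
        _ = (n : ℝ) ^ (1 - γ) + (1 - γ) * ((n : ℝ) ^ (1 - γ) * (1 / n)) := by ring
        _ = (n : ℝ) ^ (1 - γ) + (1 - γ) * (n : ℝ) ^ (-γ) := by rw [h3]
    linarith
  · have hγ1' : γ = 1 := le_antisymm hγ1 (not_lt.mp hlt)
    subst hγ1'
    have hphi : ∀ m : ℕ, phi 1 m = Real.log m := by intro m; simp [phi]
    rw [hphi, hphi]
    push_cast
    have h1 : Real.log ((n : ℝ) + 1) - Real.log n = Real.log (((n : ℝ) + 1) / n) := by
      rw [Real.log_div (by linarith) hn0.ne']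
    rw [h1]
    have h2 : Real.log (((n : ℝ) + 1) / n) ≤ ((n : ℝ) + 1) / n - 1 :=
      Real.log_le_sub_one_of_pos (by positivity)
    have h3 : ((n : ℝ) + 1) / n - 1 = 1 / n := by field_simp; ring
    have h4 : (n : ℝ) ^ (-(1 : ℝ)) = 1 / n := by
      rw [Real.rpow_neg_one]; exact inv_eq_one_div _
    rw [h4]; linarith

lemma aux_ratio {p N b : ℝ} (hp : 0 < p) (hNp : p < N) (h : p ≤ b * (N - p)) :
    ((N + 1) / N) ^ p ≤ 1 + b := by
  have hN0 : (0 : ℝ) < N := hp.trans hNp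
  have h1 : (N + 1) / N = 1 + 1 / N := by field_simp
  have h2 : ((N + 1) / N) ^ p = Real.exp (p * Real.log (1 + 1 / N)) := by
    rw [h1, Real.rpow_def_of_pos (by positivity), mul_comm]
  have h3 : Real.log (1 + 1 / N) ≤ 1 / N := by
    have := Real.log_le_sub_one_of_pos (x := 1 + 1 / N) (by positivity)
    linarith
  have h4 : Real.exp (p * Real.log (1 + 1 / N)) ≤ Real.exp (p / N) := by
    apply Real.exp_le_exp.mpr
    calc p * Real.log (1 + 1 / N) ≤ p * (1 / N) := mul_le_mul_of_nonneg_left h3 hp.le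
      _ = p / N := by ring
  have ht1 : p / N < 1 := (div_lt_one hN0).mpr hNp
  have h5 : 1 - p / N ≤ Real.exp (-(p / N)) := by
    have := Real.add_one_le_exp (-(p / N)); linarith
  have h6 : Real.exp (p / N) ≤ 1 / (1 - p / N) := by
    rw [le_div_iff₀ (by linarith)]
    calc Real.exp (p / N) * (1 - p / N) ≤ Real.exp (p / N) * Real.exp (-(p / N)) :=
          mul_le_mul_of_nonneg_left h5 (Real.exp_pos _).le
      _ = 1 := by rw [← Real.exp_add]; simp
  have h7 : 1 / (1 - p / N) = 1 + p / (N - p) := by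
    have hne1 : N - p ≠ 0 := by intro hc; rw [sub_eq_zero] at hc; exact hNp.ne hc.symm
    field_simp
    ring
  have h8 : p / (N - p) ≤ b := (div_le_iff₀ (by linarith)).mpr (by linarith [h])
  rw [h2]
  calc Real.exp (p * Real.log (1 + 1 / N)) ≤ 1 / (1 - p / N) := h4.trans h6
    _ = 1 + p / (N - p) := h7
    _ ≤ 1 + b := by linarith

set_option maxHeartbeats 2000000 in
theorem toulis_recursion_corollary (η a₁ α γ : ℝ) (hα1 : 1 < α) (hαγ : γ < α)
    (hγ : 0 < γ) (hγ1 : γ ≤ 1) (hη : 0 < η) (ha₁ : 0 ≤ a₁)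
    (hη1 : γ = 1 → α - γ < η)
    (y : ℕ → ℝ) (hy : ∀ n, 0 ≤ y n)
    (hrec : ∀ n : ℕ, 1 ≤ n →
      y n ≤ (1 - η * (n : ℝ) ^ (-γ)) * y (n - 1) + a₁ * (n : ℝ) ^ (-α)) :
    ∃ K₁ D : ℝ, 0 ≤ K₁ ∧ 0 ≤ D ∧ ∀ n : ℕ, 1 ≤ n →
      y n ≤ K₁ * (n : ℝ) ^ (-(α - γ)) +
        Real.exp (-(1 / 2) * Real.log (1 + η) * phi γ n) * (y 0 + D) := by
  set p := α - γ with hp_def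
  have hp : 0 < p := sub_pos.mpr hαγ
  have hlog : 0 < Real.log (1 + η) := Real.log_pos (by linarith)
  set ε := if γ < 1 then η / 2 else (η - p) / 2 with hε_def
  have hεpos : 0 < ε := by
    rw [hε_def]
    split_ifs with h
    · linarith
    · have hγeq : γ = 1 := le_antisymm hγ1 (not_lt.mp h)
      have := hη1 hγeq
      simp only [hp_def]
      linarith
  -- eventual key inequality
  have hEv : ∀ᶠ n : ℕ in atTop,
      p * ((n : ℝ) + 1) ^ γ ≤ (η - ε) * ((n : ℝ) - p) := by
    by_cases hlt : γ < 1
    · have hηε : η - ε = η / 2 := by rw [hε_def, if_pos hlt]; ring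
      have t1 : Tendsto (fun n : ℕ => ((n : ℝ)) ^ (-(1 - γ))) atTop (nhds 0) :=
        (tendsto_rpow_neg_atTop (by linarith)).comp tendsto_natCast_atTop_atTop
      have e1 : ∀ᶠ n : ℕ in atTop, ((n : ℝ)) ^ (-(1 - γ)) < η / (8 * p) :=
        t1.eventually (gt_mem_nhds (by positivity))
      have e2 : ∀ᶠ n : ℕ in atTop, max 1 (2 * p) ≤ (n : ℝ) :=
        tendsto_natCast_atTop_atTop.eventually_ge_atTop _
      filter_upwards [e1, e2] with n h1 h2
      have hN1 : (1 : ℝ) ≤ (n : ℝ) := le_trans (le_max_left _ _) h2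
      have hN2p : 2 * p ≤ (n : ℝ) := le_trans (le_max_right _ _) h2
      have hN0 : (0 : ℝ) < n := by linarith
      have hd : ((n : ℝ) + 1) ^ γ ≤ 2 * (n : ℝ) ^ γ := aux_double hγ.le hγ1 hN1
      have hsplit : (n : ℝ) ^ γ = (n : ℝ) ^ (-(1 - γ)) * (n : ℝ) := by
        rw [← Real.rpow_add_one hN0.ne']
        ring_nf
      have hchain : p * ((n : ℝ) + 1) ^ γ ≤ η * (n : ℝ) / 4 := by
        calc p * ((n : ℝ) + 1) ^ γ ≤ p * (2 * (n : ℝ) ^ γ) :=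
              mul_le_mul_of_nonneg_left hd hp.le
          _ = 2 * p * ((n : ℝ) ^ (-(1 - γ)) * (n : ℝ)) := by rw [hsplit]; ring
          _ ≤ 2 * p * (η / (8 * p) * (n : ℝ)) := by
              apply mul_le_mul_of_nonneg_left _ (by positivity)
              exact mul_le_mul_of_nonneg_right h1.le hN0.le
          _ = η * (n : ℝ) / 4 := by field_simp; ring
      rw [hηε]
      calc p * ((n : ℝ) + 1) ^ γ ≤ η * (n : ℝ) / 4 := hchain
        _ ≤ η / 2 * ((n : ℝ) - p) := by nlinarith
    · have hγeq : γ = 1 := le_antisymm hγ1 (not_lt.mp hlt)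
      have hpη : p < η := by have := hη1 hγeq; simpa [hp_def] using this
      have hηε : η - ε = (η + p) / 2 := by
        rw [hε_def, if_neg hlt]; ring
      set δ := (η - p) / 2 with hδ
      have hδpos : 0 < δ := by rw [hδ]; linarith
      have e2 : ∀ᶠ n : ℕ in atTop, (p + (η + p) / 2 * p) / δ ≤ (n : ℝ) :=
        tendsto_natCast_atTop_atTop.eventually_ge_atTop _
      filter_upwards [e2] with n h2
      have h3 : p + (η + p) / 2 * p ≤ δ * (n : ℝ) := by
        rw [← div_le_iff₀' hδpos]; linarith
      rw [hγeq, Real.rpow_one, hηε]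
      have hδ2 : δ = (η + p) / 2 - p := by rw [hδ]; ring
      nlinarith
  have hEv2 : ∀ᶠ n : ℕ in atTop, p < (n : ℝ) :=
    tendsto_natCast_atTop_atTop.eventually_gt_atTop p
  obtain ⟨n₀', hn₀'⟩ := Filter.eventually_atTop.mp (hEv.and hEv2)
  set n₀ := max n₀' 2 with hn₀def
  have hn₀2 : 2 ≤ n₀ := le_max_right _ _
  have hne : (Finset.range (n₀ + 1)).Nonempty := Finset.nonempty_range_iff.mpr (by omega)
  set S := (Finset.range (n₀ + 1)).sup' hne (fun k => y k * (k : ℝ) ^ p) with hS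
  set K₁ := max (a₁ * (1 + η) / ε) S with hK
  have hK₁S : ∀ k, k ≤ n₀ → y k * (k : ℝ) ^ p ≤ K₁ := by
    intro k hk
    have hmem : k ∈ Finset.range (n₀ + 1) := Finset.mem_range.mpr (by omega)
    exact le_trans (Finset.le_sup' (fun k => y k * (k : ℝ) ^ p) hmem) (le_max_right _ _)
  have hK₁0 : 0 ≤ K₁ := le_trans (by positivity) (le_max_left _ _)
  have hK₁a : a₁ * (1 + η) ≤ K₁ * ε := by
    have h := le_max_left (a₁ * (1 + η) / ε) S
    rw [div_le_iff₀ hεpos] at h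
    linarith
  have hsmall : ∀ k : ℕ, 1 ≤ k → k ≤ n₀ → y k ≤ K₁ * (k : ℝ) ^ (-p) := by
    intro k hk1 hk2
    have hkpos : (0 : ℝ) < (k : ℝ) := by exact_mod_cast Nat.pos_of_ne_zero (by omega)
    have hkp : 0 < (k : ℝ) ^ p := Real.rpow_pos_of_pos hkpos p
    have h1 := hK₁S k hk2
    rw [Real.rpow_neg hkpos.le]
    calc y k = y k * (k : ℝ) ^ p / (k : ℝ) ^ p := by field_simp
      _ ≤ K₁ / (k : ℝ) ^ p := by gcongr
      _ = K₁ * ((k : ℝ) ^ p)⁻¹ := by ring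
  -- main induction
  have main : ∀ n : ℕ, n₀ ≤ n → y n ≤ K₁ * (n : ℝ) ^ (-p) +
      Real.exp (-(1 / 2) * Real.log (1 + η) * phi γ n) * y 0 := by
    intro n hn
    induction n, hn using Nat.le_induction with
    | base =>
        have h1 := hsmall n₀ (by omega) le_rfl
        have h2 : 0 ≤ Real.exp (-(1 / 2) * Real.log (1 + η) * phi γ n₀) * y 0 :=
          mul_nonneg (Real.exp_pos _).le (hy 0)
        linarith
    | succ n hn ih =>
        obtain ⟨hkey, hpn⟩ := hn₀' n (le_trans (le_max_left _ _) hn)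
        have hn2 : 2 ≤ n := le_trans hn₀2 hn
        have hN1 : (1 : ℝ) ≤ (n : ℝ) := by exact_mod_cast Nat.one_le_of_lt hn2
        have hNpos : (0 : ℝ) < (n : ℝ) := by linarith
        have hν : (0 : ℝ) < (n : ℝ) + 1 := by linarith
        set N := (n : ℝ) with hN
        set w := (N + 1) ^ (-γ) with hw
        have hw0 : 0 < w := Real.rpow_pos_of_pos hν _
        have hw1 : w ≤ 1 := Real.rpow_le_one_of_one_le_of_nonpos (by linarith) (by linarith)
        have hden : 0 < 1 + η * w := by positivity
        have h1 := hrec (n + 1) (by omega)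
        rw [Nat.add_sub_cancel] at h1
        push_cast at h1
        -- h1 : y (n+1) ≤ (1 - η * (N+1)^(-γ)) * y n + a₁ * (N+1)^(-α)
        have h2 : (1 - η * w) * y n ≤ y n / (1 + η * w) := by
          rw [le_div_iff₀ hden]
          nlinarith [hy n, mul_nonneg (hy n) (sq_nonneg (η * w))]
        -- ratio bound
        have hr : ((N + 1) / N) ^ p ≤ 1 + (η - ε) * w := by
          apply aux_ratio hp hpn
          have hνγ : (0 : ℝ) < (N + 1) ^ γ := Real.rpow_pos_of_pos hν γ
          have hinv : (N + 1) ^ γ * w = 1 := by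
            rw [hw, Real.rpow_neg hν.le]
            field_simp
          calc p = p * ((N + 1) ^ γ * w) := by rw [hinv]; ring
            _ = (p * (N + 1) ^ γ) * w := by ring
            _ ≤ ((η - ε) * (N - p)) * w := mul_le_mul_of_nonneg_right hkey hw0.le
            _ = (η - ε) * w * (N - p) := by ring
        set r := ((N + 1) / N) ^ p with hrdef
        have mainA : K₁ * r + a₁ * w * (1 + η * w) ≤ K₁ * (1 + η * w) := by
          nlinarith [mul_le_mul_of_nonneg_left hr hK₁0,
            mul_le_mul_of_nonneg_right hK₁a hw0.le,
            mul_le_mul_of_nonneg_left hw1 (mul_nonneg (mul_nonneg ha₁ hη.le) hw0.le)]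
        have hq : (0 : ℝ) < (N + 1) ^ (-p) := Real.rpow_pos_of_pos hν _
        have step1 : K₁ * r / (1 + η * w) + a₁ * w ≤ K₁ := by
          rw [div_add' _ _ _ hden.ne', div_le_iff₀ hden]
          nlinarith [mainA]
        have hid1 : N ^ (-p) = r * (N + 1) ^ (-p) := by
          rw [hrdef, Real.div_rpow hν.le hNpos.le, Real.rpow_neg hν.le, Real.rpow_neg hNpos.le]
          have hx : (0:ℝ) < N ^ p := Real.rpow_pos_of_pos hNpos p
          have hx2 : (0:ℝ) < (N + 1) ^ p := Real.rpow_pos_of_pos hν p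
          field_simp
        have hid2 : (N + 1) ^ (-α) = w * (N + 1) ^ (-p) := by
          rw [hw, ← Real.rpow_add hν]
          congr 1
          rw [hp_def]; ring
        have hA : K₁ * N ^ (-p) / (1 + η * w) + a₁ * (N + 1) ^ (-α) ≤ K₁ * (N + 1) ^ (-p) := by
          rw [hid1, hid2]
          calc K₁ * (r * (N + 1) ^ (-p)) / (1 + η * w) + a₁ * (w * (N + 1) ^ (-p))
              = (K₁ * r / (1 + η * w) + a₁ * w) * (N + 1) ^ (-p) := by ring
            _ ≤ K₁ * (N + 1) ^ (-p) := mul_le_mul_of_nonneg_right step1 hq.le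
        -- exponential part
        have hB : Real.exp (-(1 / 2) * Real.log (1 + η) * phi γ n) / (1 + η * w) ≤
            Real.exp (-(1 / 2) * Real.log (1 + η) * phi γ (n + 1)) := by
          rw [div_le_iff₀ hden]
          have hφ : phi γ (n + 1) - phi γ n ≤ N ^ (-γ) := aux_phi_step hγ hγ1 (by omega)
          have hdγ : N ^ (-γ) ≤ 2 * w := by
            have hd := aux_double hγ.le hγ1 hN1
            have hNγ : (0:ℝ) < N ^ γ := Real.rpow_pos_of_pos hNpos γ
            have hνγ : (0:ℝ) < (N + 1) ^ γ := Real.rpow_pos_of_pos hν γ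
            rw [Real.rpow_neg hNpos.le, hw, Real.rpow_neg hν.le]
            rw [inv_eq_one_div, show (2:ℝ) * ((N+1)^γ)⁻¹ = 2 / (N+1)^γ by ring,
              div_le_div_iff₀ hNγ hνγ]
            linarith
          have hb := aux_bern hη.le hw0.le hw1
          have hc : (1 / 2) * Real.log (1 + η) * (phi γ (n + 1) - phi γ n) ≤
              (1 / 2) * Real.log (1 + η) * (2 * w) :=
            mul_le_mul_of_nonneg_left (hφ.trans hdγ) (by positivity)
          calc Real.exp (-(1 / 2) * Real.log (1 + η) * phi γ n)
              ≤ Real.exp (-(1 / 2) * Real.log (1 + η) * phi γ (n + 1) +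
                  Real.log (1 + η * w)) := by
                apply Real.exp_le_exp.mpr
                nlinarith [hb, hc]
            _ = Real.exp (-(1 / 2) * Real.log (1 + η) * phi γ (n + 1)) * (1 + η * w) := by
                rw [Real.exp_add, Real.exp_log hden]
        have hcast : ((n + 1 : ℕ) : ℝ) = N + 1 := by push_cast; ring
        rw [hcast]
        calc y (n + 1) ≤ (1 - η * w) * y n + a₁ * (N + 1) ^ (-α) := h1
          _ ≤ y n / (1 + η * w) + a₁ * (N + 1) ^ (-α) := by linarith
          _ ≤ (K₁ * N ^ (-p) + Real.exp (-(1 / 2) * Real.log (1 + η) * phi γ n) * y 0) /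
                (1 + η * w) + a₁ * (N + 1) ^ (-α) := by gcongr
          _ = (K₁ * N ^ (-p) / (1 + η * w) + a₁ * (N + 1) ^ (-α)) +
              (Real.exp (-(1 / 2) * Real.log (1 + η) * phi γ n) / (1 + η * w)) * y 0 := by
                ring
          _ ≤ K₁ * (N + 1) ^ (-p) +
              Real.exp (-(1 / 2) * Real.log (1 + η) * phi γ (n + 1)) * y 0 := by
                have := mul_le_mul_of_nonneg_right hB (hy 0)
                linarith [hA]
  refine ⟨K₁, 0, hK₁0, le_rfl, ?_⟩
  intro n hn
  rcases le_or_gt n₀ n with h | h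
  · have := main n h
    simpa using this
  · have h1 := hsmall n hn h.le
    have h2 : 0 ≤ Real.exp (-(1 / 2) * Real.log (1 + η) * phi γ n) * (y 0 + 0) :=
      mul_nonneg (Real.exp_pos _).le (by simpa using hy 0)
    linarith
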